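/- As formal power series in q^{1/2}, the character of the irreducible Virasoro module M(1/2, 1/2) satisfies: ch_q M(1/2, 1/2) = (1/∏_{i=1}^∞ (1 - q^{2i})) · ∑_{n ∈ ℤ, n odd} q^{n² + n/2}, where ch_q M(1/2, 1/2) is defined combinatorially as ∑_k q^k · (number of partitions of k into an odd number of distinct parts from {1/2, 3/2, 5/2, ...}). -/

import Mathlib

open PowerSeries

/-- `P` is the limit of the partial products of `f` in the formal power series topology. -/
def PSHasProd {R : Type*} [CommRing R] (f : ℕ → PowerSeries R) (P : PowerSeries R) : Prop :=
  ∀ N : ℕ, ∃ M : ℕ, ∀ m ≥ M,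
    PowerSeries.trunc N (∏ i ∈ Finset.range m, f i) = PowerSeries.trunc N P

/-- `S` is the limit over finite subsets of `ℤ` of the partial sums of `g` in the
formal power series topology. -/
def PSHasSumZ {R : Type*} [CommRing R] (g : ℤ → PowerSeries R) (S : PowerSeries R) : Prop :=
  ∀ N : ℕ, ∃ A : Finset ℤ, ∀ B : Finset ℤ, A ⊆ B →
    PowerSeries.trunc N (∑ n ∈ B, g n) = PowerSeries.trunc N S


open Finset

noncomputable section
abbrev PS := PowerSeries ℚ
def D (s : ℕ) : PS := ∏ i ∈ Finset.range s, (1 - X^(4*(i+1)))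
lemma constD (s : ℕ) : constantCoeff (D s) = 1 := by simp [D, map_prod]
lemma D_ne (s : ℕ) : D s ≠ 0 := fun h => by simpa [h] using constD s
lemma D_zero : D 0 = 1 := rfl
lemma D_succ (s : ℕ) : D (s+1) = D s * (1 - X^(4*(s+1))) := Finset.prod_range_succ _ _
lemma D_inv_mul (s : ℕ) : (D s)⁻¹ * D s = 1 :=
  PowerSeries.inv_mul_cancel _ (by rw [constD]; exact one_ne_zero)
lemma D_mul_inv (s : ℕ) : D s * (D s)⁻¹ = 1 :=
  PowerSeries.mul_inv_cancel _ (by rw [constD]; exact one_ne_zero)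
lemma D_inv_succ (s : ℕ) : (D s)⁻¹ = (D (s+1))⁻¹ * (1 - X^(4*(s+1))) := by
  apply mul_right_cancel₀ (D_ne s)
  rw [D_inv_mul, mul_assoc, mul_comm (1 - _) (D s), ← D_succ, D_inv_mul]

def G (M : ℕ) (n : ℤ) : PS :=
  if n.natAbs ≤ M then D (2*M) * (D ((M:ℤ)+n).toNat)⁻¹ * (D ((M:ℤ)-n).toNat)⁻¹ else 0

lemma G_neg (M : ℕ) (n : ℤ) : G M (-n) = G M n := by
  unfold G
  rw [Int.natAbs_neg]
  split_ifs with h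
  · rw [show (M:ℤ) + -n = (M:ℤ) - n by ring, show (M:ℤ) - -n = (M:ℤ) + n by ring,
      mul_right_comm]
  · rfl

lemma G_out {M : ℕ} {n : ℤ} (h : ¬ n.natAbs ≤ M) : G M n = 0 := by
  unfold G; rw [if_neg h]

lemma star (M : ℕ) (n : ℤ) :
    G (M+1) n = G M n * (1 + X^(8*M+4))
      + G M (n-1) * X^((4*((M:ℤ)+1-n)).toNat)
      + G M (n+1) * X^((4*((M:ℤ)+1+n)).toNat) := by
  -- reduce to n ≥ 0 by symmetry
  suffices H : ∀ m : ℤ, 0 ≤ m → G (M+1) m = G M m * (1 + X^(8*M+4))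
      + G M (m-1) * X^((4*((M:ℤ)+1-m)).toNat)
      + G M (m+1) * X^((4*((M:ℤ)+1+m)).toNat) by
    rcases le_or_gt 0 n with hn | hn
    · exact H n hn
    · have := H (-n) (by omega)
      rw [G_neg, G_neg] at this
      rw [show -n - 1 = -(n+1) by ring, show -n + 1 = -(n-1) by ring, G_neg, G_neg] at this
      rw [show (M:ℤ)+1 - -n = (M:ℤ)+1+n by ring, show (M:ℤ)+1 + -n = (M:ℤ)+1-n by ring] at this
      rw [this]; ring
  intro n hn
  rcases lt_trichotomy ((M:ℤ)+1) n with hM | hM | hM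
  · -- n ≥ M+2 : everything out of range
    rw [G_out (M := M+1) (by omega), G_out (M := M) (n := n) (by omega),
      G_out (M := M) (n := n-1) (by omega), G_out (M := M) (n := n+1) (by omega)]
    ring
  · -- n = M+1
    have hn1 : n = (M:ℤ)+1 := hM.symm
    subst hn1
    rw [G_out (M := M) (n := (M:ℤ)+1) (by omega), G_out (M := M) (n := (M:ℤ)+1+1) (by omega)]
    unfold G
    rw [if_pos (by omega), if_pos (by omega)]
    push_cast
    rw [show ((M:ℤ)+1+((M:ℤ)+1)).toNat = 2*(M+1) by omega,
      show ((M:ℤ)+1-((M:ℤ)+1)).toNat = 0 by omega,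
      show ((M:ℤ)+((M:ℤ)+1-1)).toNat = 2*M by omega,
      show ((M:ℤ)-((M:ℤ)+1-1)).toNat = 0 by omega,
      show (4*((M:ℤ)+1-((M:ℤ)+1))).toNat = 0 by omega]
    rw [D_zero, inv_one, mul_one, mul_one, D_mul_inv, D_mul_inv]
    ring
  · -- 0 ≤ n ≤ M
    rcases eq_or_lt_of_le (show n ≤ (M:ℤ) by omega) with hnM | hnM
    · -- n = M : boundary
      subst hnM
      have h2 : (D 1)⁻¹ * (1 - X^4 : PS) = 1 := by
        have h : (1 - X^4 : PS) = D 1 := by simp [D]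
        rw [h]; exact D_inv_mul 1
      rcases Nat.eq_zero_or_pos M with h0 | h0
      · subst h0
        unfold G
        norm_num
        have fD1 : D 1 = 1 - X^4 := by simp [D]
        have fD2 : D 2 = (1 - X^4) * (1 - X^8) := by
          rw [show (2:ℕ) = 1+1 by omega, D_succ, fD1]
        rw [D_zero, inv_one, fD2]
        linear_combination ((1+X^4:PS)*((D 1)⁻¹*(1-X^4)+1)) * h2
      · obtain ⟨k, rfl⟩ : ∃ k, M = k+1 := ⟨M-1, by omega⟩
        unfold G
        rw [if_pos (by omega), if_pos (by omega), if_pos (by omega), if_neg (by omega)]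
        push_cast
        rw [show ((k:ℤ)+1+1+((k:ℤ)+1)).toNat = 2*k+3 by omega,
          show ((k:ℤ)+1+1-((k:ℤ)+1)).toNat = 1 by omega,
          show ((k:ℤ)+1+((k:ℤ)+1)).toNat = 2*k+2 by omega,
          show ((k:ℤ)+1-((k:ℤ)+1)).toNat = 0 by omega,
          show ((k:ℤ)+1+((k:ℤ)+1-1)).toNat = 2*k+1 by omega,
          show ((k:ℤ)+1-((k:ℤ)+1-1)).toNat = 1 by omega,
          show (4*((k:ℤ)+1+1-((k:ℤ)+1))).toNat = 4 by omega,
          show (4*((k:ℤ)+1+1+((k:ℤ)+1))).toNat = 4*(2*k+3) by omega,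
          show 2*(k+1+1) = 2*k+4 by omega, show 2*(k+1) = 2*k+2 by omega]
        have f1 : D (2*k+4) = D (2*k+2) * ((1 - X^(4*(2*k+3))) * (1 - X^(4*(2*k+4)))) := by
          rw [show 2*k+4 = (2*k+3)+1 by omega, D_succ, show 2*k+3 = (2*k+2)+1 by omega, D_succ]
          ring
        have f2 : (D (2*k+1))⁻¹
            = (D (2*k+3))⁻¹ * ((1 - X^(4*(2*k+2))) * (1 - X^(4*(2*k+3)))) := by
          rw [D_inv_succ (2*k+1), show 2*k+1+1 = 2*k+2 by omega, D_inv_succ (2*k+2),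
            show 2*k+2+1 = 2*k+3 by omega]
          ring
        have f3 : (D (2*k+2))⁻¹ = (D (2*k+3))⁻¹ * (1 - X^(4*(2*k+3))) := by
          rw [D_inv_succ (2*k+2), show 2*k+2+1 = 2*k+3 by omega]
        rw [D_zero, inv_one, f1, f2, f3]
        linear_combination
          (D (2*k+2) * (D (2*k+3))⁻¹ * (1 - X^(4*(2*k+3))) * (1 + X^(4*(2*k+3)))) * h2
    · -- core : 0 ≤ n ≤ M-1
      obtain ⟨a, ha⟩ : ∃ a:ℕ, (M:ℤ)+n = (a:ℤ)+1 := ⟨((M:ℤ)+n-1).toNat, by omega⟩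
      obtain ⟨b, hb⟩ : ∃ b:ℕ, (M:ℤ)-n = (b:ℤ)+1 := ⟨((M:ℤ)-n-1).toNat, by omega⟩
      have hab : 2*M = a+b+2 := by omega
      unfold G
      rw [if_pos (by omega), if_pos (by omega), if_pos (by omega), if_pos (by omega)]
      push_cast
      rw [show ((M:ℤ)+1+n).toNat = a+2 by omega, show ((M:ℤ)+1-n).toNat = b+2 by omega,
        show ((M:ℤ)+n).toNat = a+1 by omega, show ((M:ℤ)-n).toNat = b+1 by omega,
        show ((M:ℤ)+(n-1)).toNat = a by omega, show ((M:ℤ)-(n-1)).toNat = b+2 by omega,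
        show ((M:ℤ)+(n+1)).toNat = a+2 by omega, show ((M:ℤ)-(n+1)).toNat = b by omega,
        show (4*((M:ℤ)+1-n)).toNat = 4*(b+2) by omega,
        show (4*((M:ℤ)+1+n)).toNat = 4*(a+2) by omega]
      rw [show 2*(M+1) = (2*M+1)+1 by omega, D_succ, D_succ]
      rw [D_inv_succ (a+1), D_inv_succ a, D_inv_succ (a+1), D_inv_succ (b+1),
        D_inv_succ b, D_inv_succ (b+1)]
      rw [show 2*M+1+1 = 2*M+2 by omega, show a+1+1 = a+2 by omega, show b+1+1 = b+2 by omega]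
      rw [show 4*(2*M+1) = 4*a+4*b+12 by omega, show 4*(2*M+2) = 4*a+4*b+16 by omega,
        show 8*M+4 = 4*a+4*b+12 by omega]
      ring


lemma G00 : G 0 0 = 1 := by
  unfold G
  rw [if_pos (by omega)]
  norm_num [D_zero]

def gexp (n : ℤ) : ℕ := (2*n^2+n).toNat
def ep (ε : ℚ) (n : ℤ) : ℚ := if Even n then 1 else ε
def T (ε : ℚ) (M : ℕ) (n : ℤ) : PS := C (ep ε n) * (G M n * X^(gexp n))

lemma quad_nonneg (n : ℤ) : 0 ≤ 2*n^2+n := by nlinarith [sq_nonneg n, sq_nonneg (n+1)]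

lemma ep_sub_one {ε : ℚ} (hε : ε*ε = 1) (n : ℤ) : ep ε (n-1) * ε = ep ε n := by
  unfold ep
  by_cases h : Even n
  · rw [if_pos h, if_neg, hε]
    simp [Int.even_sub, h]
  · rw [if_neg h, if_pos, one_mul]
    simp [Int.even_sub, h]
    exact Int.not_even_iff_odd.mp h

lemma ep_add_one {ε : ℚ} (hε : ε*ε = 1) (n : ℤ) : ep ε (n+1) * ε = ep ε n := by
  have h := ep_sub_one hε (n+1)
  simp only [add_sub_cancel_right] at h
  rw [← h, mul_assoc, hε, mul_one]

lemma slot {ε : ℚ} (hε : ε*ε = 1) (M : ℕ) (n : ℤ) (h1 : -(M+1:ℤ) ≤ n) (h2 : n ≤ (M:ℤ)+1) :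
    T ε (M+1) n
      = T ε M n * (1 + X^(8*M+4))
        + T ε M (n-1) * (C ε * X^(4*M+3))
        + T ε M (n+1) * (C ε * X^(4*M+1)) := by
  unfold T
  rw [star M n]
  have c1 : C (ep ε (n-1)) * C ε = C (ep ε n) := by
    rw [← map_mul, ep_sub_one hε]
  have c2 : C (ep ε (n+1)) * C ε = C (ep ε n) := by
    rw [← map_mul]
    rw [ep_add_one hε]
  have k1 : gexp (n-1) + (4*M+3) = (4*((M:ℤ)+1-n)).toNat + gexp n := by
    have q1 := quad_nonneg n
    have q2 := quad_nonneg (n-1)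
    have e1 : 2*((n:ℤ)-1)^2+(n-1) = 2*n^2+n - 4*n+1 := by ring
    unfold gexp
    generalize hB : 2*((n:ℤ)-1)^2+(n-1) = B at q2 e1 ⊢
    generalize hA : 2*(n:ℤ)^2+n = A at q1 e1 ⊢
    omega
  have k2 : gexp (n+1) + (4*M+1) = (4*((M:ℤ)+1+n)).toNat + gexp n := by
    have q1 := quad_nonneg n
    have q2 := quad_nonneg (n+1)
    have e1 : 2*((n:ℤ)+1)^2+(n+1) = 2*n^2+n + 4*n+3 := by ring
    unfold gexp
    generalize hB : 2*((n:ℤ)+1)^2+(n+1) = B at q2 e1 ⊢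
    generalize hA : 2*(n:ℤ)^2+n = A at q1 e1 ⊢
    omega
  have p1 : (X:PS)^(gexp (n-1)) * X^(4*M+3) = X^((4*((M:ℤ)+1-n)).toNat) * X^(gexp n) := by
    rw [← pow_add, ← pow_add, k1]
  have p2 : (X:PS)^(gexp (n+1)) * X^(4*M+1) = X^((4*((M:ℤ)+1+n)).toNat) * X^(gexp n) := by
    rw [← pow_add, ← pow_add, k2]
  linear_combination (-(G M (n-1) * X^(gexp (n-1)) * X^(4*M+3))) * c1
    + (-(C (ep ε n) * G M (n-1))) * p1
    + (-(G M (n+1) * X^(gexp (n+1)) * X^(4*M+1))) * c2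
    + (-(C (ep ε n) * G M (n+1))) * p2

lemma T_zero {ε : ℚ} {M : ℕ} {n : ℤ} (h : ¬ n.natAbs ≤ M) : T ε M n = 0 := by
  unfold T; rw [G_out h, zero_mul, mul_zero]

lemma shift_sum (M : ℕ) (f : ℤ → PS) (hf : ∀ n : ℤ, ¬ n.natAbs ≤ M → f n = 0) (c : ℤ)
    (hc : -1 ≤ c ∧ c ≤ 1) :
    ∑ n ∈ Icc (-(M:ℤ)-1) ((M:ℤ)+1), f (n+c) = ∑ n ∈ Icc (-(M:ℤ)-1) ((M:ℤ)+1), f n := by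
  have key : ∀ lo hi : ℤ, lo ≤ -(M:ℤ) → (M:ℤ) ≤ hi →
      ∑ n ∈ Icc lo hi, f n = ∑ n ∈ Icc (-(M:ℤ)) (M:ℤ), f n := by
    intro lo hi hlo hhi
    refine (Finset.sum_subset (Finset.Icc_subset_Icc hlo hhi) ?_).symm
    intro n hn hn'
    simp only [Finset.mem_Icc] at hn hn'
    exact hf n (by omega)
  have e1 : ∑ n ∈ Icc (-(M:ℤ)-1) ((M:ℤ)+1), f (n+c)
      = ∑ n ∈ Icc (-(M:ℤ)-1+c) ((M:ℤ)+1+c), f n := by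
    rw [← Finset.map_add_right_Icc, Finset.sum_map]
    simp [addRightEmbedding]
  rw [e1, key _ _ (by omega) (by omega)]
  exact (key _ _ (by omega) (by omega)).symm

theorem jtp (ε : ℚ) (hε : ε*ε = 1) (M : ℕ) :
    ∏ j ∈ range (2*M), (1 + C ε * X^(2*j+1))
      = ∑ n ∈ Icc (-(M:ℤ)) (M:ℤ), T ε M n := by
  induction M with
  | zero =>
    norm_num [T, gexp, ep, G00]
  | succ M ih =>
    have hC : (C ε) * (C ε) = (1 : PS) := by rw [← map_mul, hε, map_one]
    have hL : ∏ j ∈ range (2*(M+1)), (1 + C ε * X^(2*j+1))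
        = (∏ j ∈ range (2*M), (1 + C ε * X^(2*j+1)))
          * ((1 + C ε * X^(4*M+1)) * (1 + C ε * X^(4*M+3))) := by
      rw [show 2*(M+1) = (2*M+1)+1 by omega, prod_range_succ, prod_range_succ,
        show 2*(2*M)+1 = 4*M+1 by omega, show 2*(2*M+1)+1 = 4*M+3 by omega, mul_assoc]
    have hIcc : Icc (-((M+1:ℕ):ℤ)) ((M+1:ℕ):ℤ) = Icc (-(M:ℤ)-1) ((M:ℤ)+1) := by
      congr 1 <;> push_cast <;> ring
    rw [hL, ih, hIcc]
    have hbig : ∑ n ∈ Icc (-(M:ℤ)) (M:ℤ), T ε M n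
        = ∑ n ∈ Icc (-(M:ℤ)-1) ((M:ℤ)+1), T ε M n := by
      apply Finset.sum_subset (Finset.Icc_subset_Icc (by omega) (by omega))
      intro n hn hn'
      simp only [Finset.mem_Icc] at hn hn'
      exact T_zero (by omega)
    rw [hbig, Finset.sum_mul]
    have hΦ : ((1 + C ε * X^(4*M+1)) * (1 + C ε * X^(4*M+3)) : PS)
        = (1 + X^(8*M+4)) + C ε * X^(4*M+3) + C ε * X^(4*M+1) := by
      linear_combination ((X:PS)^(4*M+1) * X^(4*M+3)) * hC
    have shift1 : ∑ n ∈ Icc (-(M:ℤ)-1) ((M:ℤ)+1), T ε M (n-1) * (C ε * X^(4*M+3))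
        = ∑ n ∈ Icc (-(M:ℤ)-1) ((M:ℤ)+1), T ε M n * (C ε * X^(4*M+3)) := by
      have := shift_sum M (fun m => T ε M m * (C ε * X^(4*M+3)))
        (fun m h => by show T ε M m * _ = 0; rw [T_zero h, zero_mul]) (-1) ⟨by omega, by omega⟩
      simp only [← sub_eq_add_neg] at this
      exact this
    have shift2 : ∑ n ∈ Icc (-(M:ℤ)-1) ((M:ℤ)+1), T ε M (n+1) * (C ε * X^(4*M+1))
        = ∑ n ∈ Icc (-(M:ℤ)-1) ((M:ℤ)+1), T ε M n * (C ε * X^(4*M+1)) := by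
      exact shift_sum M (fun m => T ε M m * (C ε * X^(4*M+1)))
        (fun m h => by show T ε M m * _ = 0; rw [T_zero h, zero_mul]) 1 ⟨by omega, by omega⟩
    calc ∑ n ∈ Icc (-(M:ℤ)-1) ((M:ℤ)+1),
            T ε M n * ((1 + C ε * X^(4*M+1)) * (1 + C ε * X^(4*M+3)))
        = ∑ n ∈ Icc (-(M:ℤ)-1) ((M:ℤ)+1),
            (T ε M n * (1 + X^(8*M+4)) + T ε M (n-1) * (C ε * X^(4*M+3))
              + T ε M (n+1) * (C ε * X^(4*M+1))) := by
          rw [Finset.sum_add_distrib, Finset.sum_add_distrib, shift1, shift2,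
            ← Finset.sum_add_distrib, ← Finset.sum_add_distrib]
          apply Finset.sum_congr rfl
          intro n _
          rw [hΦ]; ring
      _ = ∑ n ∈ Icc (-(M:ℤ)-1) ((M:ℤ)+1), T ε (M+1) n := by
          apply Finset.sum_congr rfl
          intro n hn
          simp only [Finset.mem_Icc] at hn
          exact (slot hε M n (by omega) (by omega)).symm

-- counting
lemma prod_expand (ε : ℚ) (J : ℕ) :
    ∏ j ∈ range J, (1 + C ε * X^(2*j+1))
      = ∑ A ∈ (range J).powerset, C (ε^A.card) * X^(∑ j ∈ A, (2*j+1)) := by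
  have h : ∀ j ∈ range J, (1 + C ε * X^(2*j+1) : PS) = C ε * X^(2*j+1) + 1 :=
    fun j _ => by ring
  rw [Finset.prod_congr rfl h, Finset.prod_add]
  apply Finset.sum_congr rfl
  intro A hA
  rw [Finset.prod_const_one, mul_one, Finset.prod_mul_distrib, Finset.prod_const,
    ← map_pow, Finset.prod_pow_eq_pow_sum]

lemma coeff_prod_eps (ε : ℚ) (J m : ℕ) :
    coeff m (∏ j ∈ range J, (1 + C ε * X^(2*j+1)))
      = ∑ A ∈ (range J).powerset.filter (fun A => ∑ j ∈ A, (2*j+1) = m), ε^A.card := by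
  rw [prod_expand, map_sum, Finset.sum_filter]
  apply Finset.sum_congr rfl
  intro A _
  rw [coeff_C_mul, coeff_X_pow]
  by_cases h : (∑ j ∈ A, (2*j+1)) = m
  · rw [if_pos h, if_pos h.symm, mul_one]
  · rw [if_neg h, if_neg (fun hc => h hc.symm), mul_zero]

-- congruence mod X^K
def EQV (K : ℕ) (f g : PS) : Prop := (X:PS)^K ∣ f - g

lemma EQV_iff_trunc {K : ℕ} {f g : PS} : EQV K f g ↔ trunc K f = trunc K g := by
  rw [EQV, X_pow_dvd_iff]
  constructor
  · intro h; ext d; rw [coeff_trunc, coeff_trunc]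
    split_ifs with hd
    · have := h d hd; rw [map_sub] at this; linarith [this]
    · rfl
  · intro h d hd
    have : (Polynomial.coeff (trunc K f) d) = Polynomial.coeff (trunc K g) d := by rw [h]
    rw [coeff_trunc, coeff_trunc, if_pos hd, if_pos hd] at this
    rw [map_sub, this, sub_self]

lemma EQV.refl {K : ℕ} (f : PS) : EQV K f f := by simp [EQV]

lemma EQV.symm {K : ℕ} {f g : PS} (h : EQV K f g) : EQV K g f := by
  rw [EQV_iff_trunc] at h ⊢; exact h.symm

lemma EQV.trans {K : ℕ} {f g h : PS} (h1 : EQV K f g) (h2 : EQV K g h) : EQV K f h := by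
  rw [EQV_iff_trunc] at *; exact h1.trans h2

lemma EQV.add {K : ℕ} {f g f' g' : PS} (h1 : EQV K f f') (h2 : EQV K g g') :
    EQV K (f + g) (f' + g') := by
  have : f + g - (f' + g') = (f - f') + (g - g') := by ring
  rw [EQV, this]; exact dvd_add h1 h2

lemma EQV.mul {K : ℕ} {f g f' g' : PS} (h1 : EQV K f f') (h2 : EQV K g g') :
    EQV K (f * g) (f' * g') := by
  have : f * g - f' * g' = f * (g - g') + (f - f') * g' := by ring
  rw [EQV, this]; exact dvd_add (Dvd.dvd.mul_left h2 f) (Dvd.dvd.mul_right h1 g')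

lemma EQV.sum {K : ℕ} {ι : Type*} (s : Finset ι) (f g : ι → PS)
    (h : ∀ i ∈ s, EQV K (f i) (g i)) : EQV K (∑ i ∈ s, f i) (∑ i ∈ s, g i) := by
  rw [EQV, ← Finset.sum_sub_distrib]
  exact Finset.dvd_sum h

lemma EQV_inv {K : ℕ} {f g : PS} (h : EQV K f g) (hf : constantCoeff f ≠ 0)
    (hg : constantCoeff g ≠ 0) : EQV K f⁻¹ g⁻¹ := by
  have h1 := PowerSeries.mul_inv_cancel f hf
  have h2 := PowerSeries.mul_inv_cancel g hg
  have e : f⁻¹ - g⁻¹ = f⁻¹ * g⁻¹ * (g - f) := by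
    calc f⁻¹ - g⁻¹ = f⁻¹ * (g * g⁻¹) - (f * f⁻¹) * g⁻¹ := by rw [h1, h2]; ring
    _ = f⁻¹ * g⁻¹ * (g - f) := by ring
  rw [EQV, e]
  exact Dvd.dvd.mul_left h.symm _

lemma EQV_D {K : ℕ} : ∀ {s : ℕ}, K ≤ s → EQV K (D s) (D K) := by
  intro s hs
  induction s with
  | zero =>
    have h0 : K = 0 := by omega
    subst h0; exact EQV.refl _
  | succ s ih =>
    rcases Nat.lt_or_ge K (s+1) with h | h
    · refine EQV.trans ?_ (ih (by omega))
      show (X:PS)^K ∣ _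
      rw [D_succ]
      have e : D s * (1 - X ^ (4 * (s + 1))) - D s = -(D s * X^(4*(s+1))) := by ring
      rw [e]
      exact dvd_neg.mpr (Dvd.dvd.mul_left (pow_dvd_pow X (by omega)) _)
    · have h1 : K = s+1 := by omega
      subst h1; exact EQV.refl _

lemma EQV_D' {K s t : ℕ} (hs : K ≤ s) (ht : K ≤ t) : EQV K (D s) (D t) :=
  (EQV_D hs).trans (EQV_D ht).symm

lemma EQV_Dinv {K s t : ℕ} (hs : K ≤ s) (ht : K ≤ t) : EQV K (D s)⁻¹ (D t)⁻¹ :=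
  EQV_inv (EQV_D' hs ht) (by rw [constD]; norm_num) (by rw [constD]; norm_num)

lemma natAbs_le_of_quad {n : ℤ} {K : ℕ} (h : 2*n^2+n < K) : n.natAbs ≤ K := by
  by_contra hc
  push_neg at hc
  have h1 : (K:ℤ) + 1 ≤ |n| := by
    rw [Int.abs_eq_natAbs]; exact_mod_cast hc
  nlinarith [sq_abs n, neg_abs_le n, abs_nonneg n]

end

/-- The character of `M(1/2, 1/2)`: in the variable `t = q^{1/2}`, the generating series
`∑_k (number of partitions of k into an odd number of distinct half-odd parts) q^k`
(a part `(2j+1)/2` is encoded by `j : ℕ` and contributes `t^{2j+1}`, so the coefficient of `t^m`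
counts sets `A` with `∑_{j∈A} (2j+1) = m` of odd cardinality) equals
`(1/∏_{i≥1}(1 - q^{2i})) · ∑_{n odd} q^{n² + n/2}`, where `q^{a/2} = t^a`. -/
theorem character_M_half_half (P S : PowerSeries ℚ)
    (hP : PSHasProd (fun i => 1 - (PowerSeries.X : PowerSeries ℚ) ^ (4 * (i + 1))) P)
    (hS : PSHasSumZ (fun n => if Odd n then
      (PowerSeries.X : PowerSeries ℚ) ^ (2 * n ^ 2 + n).toNat else 0) S) :
    PowerSeries.mk (fun m =>
        (Nat.card {A : Finset ℕ | ∑ j ∈ A, (2 * j + 1) = m ∧ Odd A.card} : ℚ))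
      = P⁻¹ * S := by
  classical
  set mkc : PS := PowerSeries.mk (fun m =>
      (Nat.card {A : Finset ℕ | ∑ j ∈ A, (2 * j + 1) = m ∧ Odd A.card} : ℚ)) with hmkc
  -- constant coefficient of P is 1
  have hPc : constantCoeff P ≠ 0 := by
    obtain ⟨m₁, hm₁⟩ := hP 1
    have h := hm₁ m₁ le_rfl
    have h0 : Polynomial.coeff (trunc 1 (∏ i ∈ Finset.range m₁,
        (1 - (X:PS)^(4*(i+1))))) 0 = Polynomial.coeff (trunc 1 P) 0 := by rw [h]
    rw [coeff_trunc, coeff_trunc, if_pos (by omega), if_pos (by omega)] at h0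
    have h1 : (coeff 0) (∏ i ∈ Finset.range m₁, (1 - (X:PS)^(4*(i+1)))) = 1 := by
      rw [coeff_zero_eq_constantCoeff]
      exact constD m₁
    rw [coeff_zero_eq_constantCoeff] at h0
    rw [coeff_zero_eq_constantCoeff] at h1
    rw [← h0, h1]
    norm_num
  have main : P * mkc = S := by
    ext d
    set K := d + 1 with hK
    set M := 2*K+2 with hM
    -- Step 1: mkc ≡ (1/2)(Prod₁ - Prod₋₁)
    have EQV1 : EQV K mkc (C (1/2) *
        ((∏ j ∈ range (2*M), (1 + C 1 * X^(2*j+1)))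
          - ∏ j ∈ range (2*M), (1 + C (-1) * X^(2*j+1)))) := by
      rw [EQV_iff_trunc]
      ext m
      rw [coeff_trunc, coeff_trunc]
      split_ifs with hm
      · -- coefficient computation
        rw [hmkc, coeff_mk, coeff_C_mul, map_sub, coeff_prod_eps, coeff_prod_eps]
        have hset : {A : Finset ℕ | ∑ j ∈ A, (2 * j + 1) = m ∧ Odd A.card}
            = ↑(((range (2*M)).powerset.filter
                (fun A => ∑ j ∈ A, (2*j+1) = m)).filter (fun A => Odd A.card)) := by
          ext A
          simp only [Set.mem_setOf_eq, Finset.coe_filter, Finset.mem_filter,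
            Finset.mem_powerset, Set.mem_setOf_eq]
          constructor
          · rintro ⟨h1, h2⟩
            refine ⟨⟨fun j hj => ?_, h1⟩, h2⟩
            have hle : 2*j+1 ≤ m := by
              rw [← h1]
              exact Finset.single_le_sum (f := fun j => 2*j+1) (fun i _ => by omega) hj
            rw [Finset.mem_range]
            omega
          · rintro ⟨⟨_, h1⟩, h2⟩
            exact ⟨h1, h2⟩
        rw [hset, Nat.card_coe_set_eq, Set.ncard_coe_finset]
        rw [← Finset.sum_boole, ← Finset.sum_sub_distrib, Finset.mul_sum]
        apply Finset.sum_congr rfl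
        intro A _
        rcases Nat.even_or_odd A.card with hc | hc
        · rw [if_neg (by simpa [Nat.not_odd_iff_even] using hc), hc.neg_one_pow, one_pow]
          ring
        · rw [if_pos hc, hc.neg_one_pow, one_pow]
          ring
      · rfl
    -- Step 2: P ≡ D R
    obtain ⟨m₀, hm₀⟩ := hP K
    set R := max m₀ K with hR
    have EQV2 : EQV K P (D R) := by
      rw [EQV_iff_trunc]
      exact (hm₀ R (le_max_left _ _)).symm
    -- Step 3: exact identity via jtp
    have EQID : D R * (C (1/2) *
        ((∏ j ∈ range (2*M), (1 + C 1 * X^(2*j+1)))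
          - ∏ j ∈ range (2*M), (1 + C (-1) * X^(2*j+1))))
        = ∑ n ∈ Icc (-(M:ℤ)) (M:ℤ),
            (if Odd n then D R * (G M n * X^(gexp n)) else 0) := by
      rw [jtp 1 (by norm_num) M, jtp (-1) (by norm_num) M, ← Finset.sum_sub_distrib,
        Finset.mul_sum, Finset.mul_sum]
      apply Finset.sum_congr rfl
      intro n _
      have hhalf : (C (1/2) : PS) * 2 = 1 := by
        rw [show (2:PS) = C 2 from (map_ofNat (C (R := ℚ)) 2).symm, ← map_mul]
        norm_num
      unfold T ep
      by_cases h : Even n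
      · rw [if_pos h, if_pos h, if_neg (by simpa [Int.not_odd_iff_even] using h)]
        ring
      · rw [if_neg h, if_neg h, if_pos (by rwa [Int.not_even_iff_odd] at h)]
        rw [map_neg, map_one]
        linear_combination (D R * (G M n * X^(gexp n))) * hhalf
    -- Step 4: truncate the Gaussian binomials to 1
    have EQV4 : EQV K (∑ n ∈ Icc (-(M:ℤ)) (M:ℤ),
            (if Odd n then D R * (G M n * X^(gexp n)) else 0))
        (∑ n ∈ Icc (-(M:ℤ)) (M:ℤ), (if Odd n then (X:PS)^(gexp n) else 0)) := by
      apply EQV.sum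
      intro n _
      by_cases hodd : Odd n
      · rw [if_pos hodd, if_pos hodd]
        by_cases hg : gexp n < K
        · -- small exponent: the coefficient is ≡ 1
          have hq := quad_nonneg n
          have hnK : n.natAbs ≤ K := by
            apply natAbs_le_of_quad
            unfold gexp at hg
            omega
          have hin : n.natAbs ≤ M := by omega
          unfold G
          rw [if_pos hin]
          have ha : K ≤ ((M:ℤ)+n).toNat := by omega
          have hb : K ≤ ((M:ℤ)-n).toNat := by omega
          have h2M : K ≤ 2*M := by omega
          have hRK : K ≤ R := le_max_right _ _
          have step : EQV K
              (D R * (D (2*M) * (D ((M:ℤ)+n).toNat)⁻¹ * (D ((M:ℤ)-n).toNat)⁻¹ * X^(gexp n)))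
              (D K * (D K * (D K)⁻¹ * (D K)⁻¹ * X^(gexp n))) :=
            EQV.mul (EQV_D' hRK le_rfl)
              (EQV.mul (EQV.mul (EQV.mul (EQV_D' h2M le_rfl) (EQV_Dinv ha le_rfl))
                (EQV_Dinv hb le_rfl)) (EQV.refl _))
          have hcan : D K * (D K * (D K)⁻¹ * (D K)⁻¹ * X^(gexp n)) = X^(gexp n) := by
            have e : D K * (D K * (D K)⁻¹ * (D K)⁻¹ * X^(gexp n))
                = (D K * (D K)⁻¹) * ((D K * (D K)⁻¹) * X^(gexp n)) := by ring
            rw [e, D_mul_inv, one_mul, one_mul]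
          rw [hcan] at step
          exact step
        · -- large exponent: both sides divisible by X^K
          push_neg at hg
          have d1 : EQV K (D R * (G M n * X^(gexp n))) 0 := by
            show (X:PS)^K ∣ _
            rw [sub_zero]
            exact Dvd.dvd.mul_left (Dvd.dvd.mul_left (pow_dvd_pow X hg) _) _
          have d2 : EQV K ((X:PS)^(gexp n)) 0 := by
            show (X:PS)^K ∣ _
            rw [sub_zero]
            exact pow_dvd_pow X hg
          exact d1.trans d2.symm
      · rw [if_neg hodd, if_neg hodd]
        exact EQV.refl _
    -- Step 5: relate to S
    have EQV5 : EQV K (∑ n ∈ Icc (-(M:ℤ)) (M:ℤ), (if Odd n then (X:PS)^(gexp n) else 0)) S := by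
      obtain ⟨A, hA⟩ := hS K
      have h1 := hA (A ∪ Icc (-(M:ℤ)) (M:ℤ)) Finset.subset_union_left
      have hsub : Icc (-(M:ℤ)) (M:ℤ) ⊆ A ∪ Icc (-(M:ℤ)) (M:ℤ) := Finset.subset_union_right
      have hsplit := Finset.sum_sdiff (f := fun n : ℤ => if Odd n then (X:PS)^((2*n^2+n).toNat) else 0) hsub
      have hdvd : (X:PS)^K ∣ ∑ n ∈ (A ∪ Icc (-(M:ℤ)) (M:ℤ)) \ Icc (-(M:ℤ)) (M:ℤ),
          (if Odd n then (X:PS)^((2*n^2+n).toNat) else 0) := by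
        apply Finset.dvd_sum
        intro n hn
        rw [Finset.mem_sdiff, Finset.mem_Icc] at hn
        have hn' : ¬ (-(M:ℤ) ≤ n ∧ n ≤ (M:ℤ)) := hn.2
        have habs : (M:ℤ) < |n| := by
          rcases le_or_gt n 0 with h | h
          · rw [abs_of_nonpos h]; omega
          · rw [abs_of_pos h]; omega
        have hMZ : ((M:ℕ):ℤ) = 2*(K:ℤ)+2 := by rw [hM]; push_cast; ring
        have habs2 : 2*(K:ℤ)+3 ≤ |n| := by omega
        have hgK : (K:ℤ) ≤ 2*n^2+n := by
          nlinarith [sq_abs n, neg_abs_le n, abs_nonneg n, habs2,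
            mul_le_mul_of_nonneg_left habs2 (abs_nonneg n)]
        by_cases ho : Odd n
        · rw [if_pos ho]
          exact pow_dvd_pow X (by omega)
        · rw [if_neg ho]
          exact dvd_zero _
      have e1 : EQV K (∑ n ∈ Icc (-(M:ℤ)) (M:ℤ), (if Odd n then (X:PS)^(gexp n) else 0))
          (∑ n ∈ (A ∪ Icc (-(M:ℤ)) (M:ℤ)), (if Odd n then (X:PS)^((2*n^2+n).toNat) else 0)) := by
        show (X:PS)^K ∣ _
        rw [← hsplit]
        unfold gexp
        have e : (∑ n ∈ Icc (-(M:ℤ)) (M:ℤ), (if Odd n then (X:PS)^((2*n^2+n).toNat) else 0))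
            - ((∑ n ∈ (A ∪ Icc (-(M:ℤ)) (M:ℤ)) \ Icc (-(M:ℤ)) (M:ℤ),
                (if Odd n then (X:PS)^((2*n^2+n).toNat) else 0))
              + ∑ n ∈ Icc (-(M:ℤ)) (M:ℤ), (if Odd n then (X:PS)^((2*n^2+n).toNat) else 0))
            = -(∑ n ∈ (A ∪ Icc (-(M:ℤ)) (M:ℤ)) \ Icc (-(M:ℤ)) (M:ℤ),
                (if Odd n then (X:PS)^((2*n^2+n).toNat) else 0)) := by ring
        rw [e]
        exact dvd_neg.mpr hdvd
      refine e1.trans ?_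
      rw [EQV_iff_trunc]
      exact h1
    -- chain
    have EQVfinal : EQV K (P * mkc) S := by
      refine ((EQV2.mul EQV1).trans ?_).trans EQV5
      rw [EQID]
      exact EQV4
    rw [EQV_iff_trunc] at EQVfinal
    have := congrArg (fun q => Polynomial.coeff q d) EQVfinal
    simpa [coeff_trunc, hK] using this
  rw [← main, ← mul_assoc, PowerSeries.inv_mul_cancel P hPc, one_mul]
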